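/- Let 𝒜 ⊂ ℝ² and η : 𝒜 → ℝ be a C¹ function, and for (x₁,x₂) ∈ 𝒜 let n(x₁,x₂) = (∂₁η(x₁,x₂), ∂₂η(x₁,x₂), −1)/√(1 + |∇η(x₁,x₂)|²) be the unit normal to the graph of η. Then for any two points c, y ∈ 𝒜 and any v ∈ ℝ³ with v ≠ 0 and n(y)·v = 0, one has |n(c)·(v/|v|)| ≤ 2 |∇η(c) − ∇η(y)|. -/

import Mathlib

/-!
Statement 17: if `n` is the unit normal of the graph of a `C¹` function `η` and
`v ≠ 0` is tangent at a point `y` (i.e. `n(y)·v = 0`), then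
`|n(c)·(v/|v|)| ≤ 2 |∇η(c) − ∇η(y)|`.
-/

open scoped RealInnerProductSpace

noncomputable section

abbrev R2 := EuclideanSpace ℝ (Fin 2)
abbrev R3 := EuclideanSpace ℝ (Fin 3)

/-- The (non-normalized direction followed by normalization) unit normal
`(∂₁η, ∂₂η, −1)/√(1+|∇η|²)` of the graph of `η`, expressed in terms of the
gradient vector `g = ∇η`. -/
def normalOf (g : R2) : R3 :=
  (Real.sqrt (1 + ‖g‖ ^ 2))⁻¹ • (WithLp.equiv 2 (Fin 3 → ℝ)).symm ![g 0, g 1, -1]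

/-- The unnormalized normal vector. -/
def Fvec (g : R2) : R3 := (WithLp.equiv 2 (Fin 3 → ℝ)).symm ![g 0, g 1, -1]

lemma normSq_R2 (a : R2) : ‖a‖ ^ 2 = a 0 ^ 2 + a 1 ^ 2 := by
  rw [EuclideanSpace.norm_eq, Real.sq_sqrt (by positivity)]
  simp [Fin.sum_univ_two, sq_abs]

lemma Fvec_norm (a : R2) : ‖Fvec a‖ = Real.sqrt (1 + ‖a‖ ^ 2) := by
  rw [EuclideanSpace.norm_eq]
  congr 1
  simp only [Fvec, Fin.sum_univ_three, WithLp.equiv_symm_apply, PiLp.toLp_apply,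
    Matrix.cons_val_zero, Matrix.cons_val_one, Matrix.head_cons,
    Matrix.cons_val_two, Matrix.tail_cons, Real.norm_eq_abs, sq_abs]
  rw [normSq_R2]
  ring

lemma Fvec_sub_norm (a b : R2) : ‖Fvec a - Fvec b‖ = ‖a - b‖ := by
  rw [EuclideanSpace.norm_eq, EuclideanSpace.norm_eq]
  congr 1
  simp only [Fin.sum_univ_three, Fin.sum_univ_two, PiLp.sub_apply, Fvec,
    WithLp.equiv_symm_apply, PiLp.toLp_apply, Matrix.cons_val_zero, Matrix.cons_val_one,
    Matrix.head_cons, Matrix.cons_val_two, Matrix.tail_cons, Real.norm_eq_abs,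
    sq_abs]
  ring

lemma normalOf_lipschitz (a b : R2) : ‖normalOf a - normalOf b‖ ≤ 2 * ‖a - b‖ := by
  set sa := Real.sqrt (1 + ‖a‖ ^ 2) with hsa
  set sb := Real.sqrt (1 + ‖b‖ ^ 2) with hsb
  have hsa1 : 1 ≤ sa := Real.one_le_sqrt.mpr (le_add_of_nonneg_right (sq_nonneg _))
  have hsb1 : 1 ≤ sb := Real.one_le_sqrt.mpr (le_add_of_nonneg_right (sq_nonneg _))
  have hsa0 : 0 < sa := lt_of_lt_of_le one_pos hsa1
  have hsb0 : 0 < sb := lt_of_lt_of_le one_pos hsb1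
  have hFa : ‖Fvec a‖ = sa := Fvec_norm a
  have hFb : ‖Fvec b‖ = sb := Fvec_norm b
  have hdiff : |sa - sb| ≤ ‖a - b‖ := by
    rw [← hFa, ← hFb, ← Fvec_sub_norm a b]
    exact abs_norm_sub_norm_le _ _
  have hsplit : normalOf a - normalOf b
      = sa⁻¹ • (Fvec a - Fvec b) + (sa⁻¹ - sb⁻¹) • Fvec b := by
    show sa⁻¹ • Fvec a - sb⁻¹ • Fvec b = _
    module
  rw [hsplit]
  have h1 : ‖sa⁻¹ • (Fvec a - Fvec b)‖ = sa⁻¹ * ‖a - b‖ := by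
    rw [norm_smul, Fvec_sub_norm, Real.norm_eq_abs, abs_of_pos (by positivity)]
  have h2 : ‖(sa⁻¹ - sb⁻¹) • Fvec b‖ ≤ sa⁻¹ * ‖a - b‖ := by
    rw [norm_smul, hFb, Real.norm_eq_abs]
    have : sa⁻¹ - sb⁻¹ = (sb - sa) / (sa * sb) := by
      field_simp
    rw [this, abs_div, abs_of_pos (mul_pos hsa0 hsb0)]
    rw [div_mul_eq_mul_div]
    rw [div_le_iff₀ (mul_pos hsa0 hsb0)]
    have : |sb - sa| ≤ ‖a - b‖ := by rwa [abs_sub_comm]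
    calc |sb - sa| * sb ≤ ‖a - b‖ * sb := by
          exact mul_le_mul_of_nonneg_right this (le_of_lt hsb0)
      _ = sa⁻¹ * ‖a - b‖ * (sa * sb) := by
          field_simp
  calc ‖sa⁻¹ • (Fvec a - Fvec b) + (sa⁻¹ - sb⁻¹) • Fvec b‖
      ≤ ‖sa⁻¹ • (Fvec a - Fvec b)‖ + ‖(sa⁻¹ - sb⁻¹) • Fvec b‖ := norm_add_le _ _
    _ ≤ sa⁻¹ * ‖a - b‖ + sa⁻¹ * ‖a - b‖ := by rw [h1]; exact add_le_add_right h2 _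
    _ = 2 * (sa⁻¹ * ‖a - b‖) := by ring
    _ ≤ 2 * (1 * ‖a - b‖) := by
        have : sa⁻¹ ≤ 1 := inv_le_one_of_one_le₀ hsa1
        gcongr
    _ = 2 * ‖a - b‖ := by ring

theorem stmt_17 (𝒜 : Set R2) (η : R2 → ℝ) (g : R2 → R2)
    (hg : ∀ x ∈ 𝒜, HasGradientAt η (g x) x)
    (c y : R2) (hc : c ∈ 𝒜) (hy : y ∈ 𝒜)
    (v : R3) (hv : v ≠ 0) (hperp : ⟪normalOf (g y), v⟫ = 0) :
    |⟪normalOf (g c), ‖v‖⁻¹ • v⟫| ≤ 2 * ‖g c - g y‖ := by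
  have hu : ‖‖v‖⁻¹ • v‖ = 1 := norm_smul_inv_norm hv
  have h0 : ⟪normalOf (g y), ‖v‖⁻¹ • v⟫ = 0 := by
    rw [real_inner_smul_right, hperp, mul_zero]
  have h1 : ⟪normalOf (g c), ‖v‖⁻¹ • v⟫
      = ⟪normalOf (g c) - normalOf (g y), ‖v‖⁻¹ • v⟫ := by
    rw [inner_sub_left, h0, sub_zero]
  rw [h1]
  calc |⟪normalOf (g c) - normalOf (g y), ‖v‖⁻¹ • v⟫|
      ≤ ‖normalOf (g c) - normalOf (g y)‖ * ‖‖v‖⁻¹ • v‖ := abs_real_inner_le_norm _ _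
    _ = ‖normalOf (g c) - normalOf (g y)‖ := by rw [hu, mul_one]
    _ ≤ 2 * ‖g c - g y‖ := normalOf_lipschitz _ _
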